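/- (Proposition 2) Let F : ℝ^{Ma}×ℝ^{Mb} → ℝ be defined by F(u,v) = (N/λ)·s(u,v) if s(u,v) ≤ 1 and F(u,v) = (N/λ)·log s(u,v) + N/λ if s(u,v) ≥ 1, where s(u,v) = ∑_{i,j} e^{λ(u_i + v_j − C_{ij}) − 1}. Then the gradient of F is Lipschitz continuous with constant at most 2λN: for all X, X' ∈ ℝ^{Ma}×ℝ^{Mb}, ‖∇F(X) − ∇F(X')‖ ≤ 2λN·‖X − X'‖ (Euclidean norms). -/

import Mathlib

open scoped BigOperators
set_option synthInstance.maxHeartbeats 1000000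
set_option maxHeartbeats 1000000

open Real Set


/-- `s(u,v) = ∑_{k,l} e^{λ(u_k + v_l − C_{kl}) − 1}`, with `(u,v)` encoded as a
point of the Euclidean space `ℝ^{Ma+Mb}` indexed by `Fin Ma ⊕ Fin Mb`. -/
noncomputable def sQE {Ma Mb : ℕ} (C : Matrix (Fin Ma) (Fin Mb) ℝ) (lam : ℝ)
    (x : EuclideanSpace ℝ (Fin Ma ⊕ Fin Mb)) : ℝ :=
  ∑ i, ∑ j, Real.exp (lam * (x (Sum.inl i) + x (Sum.inr j) - C i j) - 1)

/-- The conjugate `F` of the normalized Sinkhorn distance, as a function on the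
Euclidean space `ℝ^{Ma+Mb}`: `F = (N/λ)·s` where `s ≤ 1`, and
`(N/λ)·log s + N/λ` where `s ≥ 1`. -/
noncomputable def FconjE {Ma Mb : ℕ} (C : Matrix (Fin Ma) (Fin Mb) ℝ) (lam N : ℝ)
    (x : EuclideanSpace ℝ (Fin Ma ⊕ Fin Mb)) : ℝ :=
  if sQE C lam x ≤ 1 then (N / lam) * sQE C lam x
  else (N / lam) * Real.log (sQE C lam x) + N / lam


namespace SinkProof

/-! ### Weighted Cauchy-Schwarz and covariance bounds -/

lemma cauchy_w {P : Type*} [Fintype P] (w f g : P → ℝ) (hw : ∀ p, 0 ≤ w p) :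
    |∑ p, w p * (f p * g p)| ≤
      Real.sqrt (∑ p, w p * f p ^ 2) * Real.sqrt (∑ p, w p * g p ^ 2) := by
  have key := Finset.sum_sq_le_sum_mul_sum_of_sq_eq_mul Finset.univ
    (r := fun p => w p * (f p * g p)) (f := fun p => w p * f p ^ 2)
    (g := fun p => w p * g p ^ 2)
    (fun p _ => mul_nonneg (hw p) (sq_nonneg _))
    (fun p _ => mul_nonneg (hw p) (sq_nonneg _)) (fun p _ => by ring)
  have h1 : |∑ p, w p * (f p * g p)| = Real.sqrt ((∑ p, w p * (f p * g p)) ^ 2) :=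
    (Real.sqrt_sq_eq_abs _).symm
  rw [h1, ← Real.sqrt_mul (Finset.sum_nonneg fun p _ => mul_nonneg (hw p) (sq_nonneg _))]
  exact Real.sqrt_le_sqrt key

lemma sum_sq_shift {P : Type*} [Fintype P] (w a : P → ℝ) (hw : ∀ p, 0 ≤ w p) (m : ℝ)
    (hm : (∑ p, w p) * m = ∑ p, w p * a p) :
    ∑ p, w p * (a p - m) ^ 2 ≤ ∑ p, w p * a p ^ 2 := by
  have expand : ∀ p, w p * (a p - m) ^ 2
      = w p * a p ^ 2 - 2 * m * (w p * a p) + m ^ 2 * w p := fun p => by ring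
  have h : ∑ p, w p * (a p - m) ^ 2
      = ∑ p, w p * a p ^ 2 - 2 * m * (∑ p, w p * a p) + m ^ 2 * (∑ p, w p) := by
    simp_rw [expand]
    rw [Finset.sum_add_distrib, Finset.sum_sub_distrib, ← Finset.mul_sum, ← Finset.mul_sum]
  rw [h, ← hm]
  nlinarith [sq_nonneg m, Finset.sum_nonneg (fun p (_ : p ∈ Finset.univ) => hw p)]

lemma cov_identity {P : Type*} [Fintype P] (w a b : P → ℝ) (m n s : ℝ)
    (hm : s * m = ∑ p, w p * a p) (hn : s * n = ∑ p, w p * b p)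
    (hsum : s = ∑ p, w p) :
    ∑ p, w p * ((a p - m) * (b p - n))
      = ∑ p, w p * (a p * b p) - s * (m * n) := by
  have expand : ∀ p, w p * ((a p - m) * (b p - n))
      = w p * (a p * b p) - n * (w p * a p) - m * (w p * b p) + (m * n) * w p :=
    fun p => by ring
  simp_rw [expand]
  rw [Finset.sum_add_distrib, Finset.sum_sub_distrib, Finset.sum_sub_distrib,
    ← Finset.mul_sum, ← Finset.mul_sum, ← Finset.mul_sum, ← hm, ← hn, ← hsum]
  ring

/-- Covariance-type Cauchy--Schwarz bound. -/
lemma cov_bound {P : Type*} [Fintype P] (w a b : P → ℝ) (hw : ∀ p, 0 ≤ w p)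
    (hs : 0 < ∑ p, w p) {Ca Cb : ℝ}
    (ha : ∑ p, w p * a p ^ 2 ≤ (∑ p, w p) * Ca)
    (hb : ∑ p, w p * b p ^ 2 ≤ (∑ p, w p) * Cb) :
    |∑ p, w p * (a p * b p) - (∑ p, w p)⁻¹ * ((∑ p, w p * a p) * (∑ p, w p * b p))|
      ≤ (∑ p, w p) * Real.sqrt (Ca * Cb) := by
  set s : ℝ := ∑ p, w p with hsdef
  have hs0 : s ≠ 0 := ne_of_gt hs
  set m : ℝ := s⁻¹ * ∑ p, w p * a p with hmdef
  set n : ℝ := s⁻¹ * ∑ p, w p * b p with hndef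
  have hm : s * m = ∑ p, w p * a p := by rw [hmdef]; field_simp
  have hn : s * n = ∑ p, w p * b p := by rw [hndef]; field_simp
  have hid := cov_identity w a b m n s hm hn hsdef
  have hgoal : ∑ p, w p * (a p * b p) - s⁻¹ * ((∑ p, w p * a p) * (∑ p, w p * b p))
      = ∑ p, w p * ((a p - m) * (b p - n)) := by
    rw [hid, ← hm, ← hn]
    field_simp
  rw [hgoal]
  have hcs := cauchy_w w (fun p => a p - m) (fun p => b p - n) hw
  have hA : ∑ p, w p * (a p - m) ^ 2 ≤ s * Ca := le_trans (sum_sq_shift w a hw m hm) ha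
  have hB : ∑ p, w p * (b p - n) ^ 2 ≤ s * Cb := le_trans (sum_sq_shift w b hw n hn) hb
  have h0A : (0:ℝ) ≤ ∑ p, w p * (a p - m) ^ 2 :=
    Finset.sum_nonneg fun p _ => mul_nonneg (hw p) (sq_nonneg _)
  have h0B : (0:ℝ) ≤ ∑ p, w p * (b p - n) ^ 2 :=
    Finset.sum_nonneg fun p _ => mul_nonneg (hw p) (sq_nonneg _)
  refine le_trans hcs ?_
  have hsq : Real.sqrt (∑ p, w p * (a p - m) ^ 2) * Real.sqrt (∑ p, w p * (b p - n) ^ 2)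
      ≤ Real.sqrt (s * Ca) * Real.sqrt (s * Cb) :=
    mul_le_mul (Real.sqrt_le_sqrt hA) (Real.sqrt_le_sqrt hB) (Real.sqrt_nonneg _)
      (Real.sqrt_nonneg _)
  refine le_trans hsq ?_
  rw [← Real.sqrt_mul (le_trans h0A hA)]
  have : s * Ca * (s * Cb) = s ^ 2 * (Ca * Cb) := by ring
  rw [this, Real.sqrt_mul (sq_nonneg s), Real.sqrt_sq hs.le]


/-! ### The Euclidean-space setup -/

variable {Ma Mb : ℕ}

noncomputable def eV (p : Fin Ma × Fin Mb) : EuclideanSpace ℝ (Fin Ma ⊕ Fin Mb) :=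
  EuclideanSpace.single (Sum.inl p.1) (1:ℝ) + EuclideanSpace.single (Sum.inr p.2) (1:ℝ)

lemma inner_eV (p : Fin Ma × Fin Mb) (h : EuclideanSpace ℝ (Fin Ma ⊕ Fin Mb)) :
    (inner ℝ (eV p) h : ℝ) = h (Sum.inl p.1) + h (Sum.inr p.2) := by
  simp [eV, inner_add_left, EuclideanSpace.inner_single_left]

lemma inner_eV_sq_le (p : Fin Ma × Fin Mb) (h : EuclideanSpace ℝ (Fin Ma ⊕ Fin Mb)) :
    (inner ℝ (eV p) h : ℝ)^2 ≤ 2 * ‖h‖^2 := by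
  rw [inner_eV]
  have h1 : (h (Sum.inl p.1) + h (Sum.inr p.2))^2
      ≤ 2 * (h (Sum.inl p.1)^2 + h (Sum.inr p.2)^2) := by
    nlinarith [sq_nonneg (h (Sum.inl p.1) - h (Sum.inr p.2))]
  have h2 : h (Sum.inl p.1)^2 + h (Sum.inr p.2)^2 ≤ ‖h‖^2 := by
    have hn : ‖h‖^2 = ∑ k, h k ^ 2 := by
      rw [EuclideanSpace.norm_eq, Real.sq_sqrt (by positivity)]
      simp [Real.norm_eq_abs, sq_abs]
    rw [hn]
    have hp : h (Sum.inl p.1)^2 + h (Sum.inr p.2)^2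
        = ∑ k ∈ ({Sum.inl p.1, Sum.inr p.2} : Finset (Fin Ma ⊕ Fin Mb)), h k ^ 2 := by
      rw [Finset.sum_pair (by simp)]
    rw [hp]
    exact Finset.sum_le_sum_of_subset_of_nonneg (Finset.subset_univ _)
      (fun k _ _ => sq_nonneg _)
  linarith

noncomputable def wF (C : Matrix (Fin Ma) (Fin Mb) ℝ) (lam : ℝ)
    (x : EuclideanSpace ℝ (Fin Ma ⊕ Fin Mb)) (p : Fin Ma × Fin Mb) : ℝ :=
  Real.exp (lam * (inner ℝ (eV p) x : ℝ) - (lam * C p.1 p.2 + 1))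

variable (C : Matrix (Fin Ma) (Fin Mb) ℝ) (lam N : ℝ)

lemma wF_pos (x : EuclideanSpace ℝ (Fin Ma ⊕ Fin Mb)) (p : Fin Ma × Fin Mb) :
    0 < wF C lam x p := Real.exp_pos _

noncomputable def sS (x : EuclideanSpace ℝ (Fin Ma ⊕ Fin Mb)) : ℝ :=
  ∑ p : Fin Ma × Fin Mb, wF C lam x p

lemma sQE_eq_sS (x : EuclideanSpace ℝ (Fin Ma ⊕ Fin Mb)) :
    sQE C lam x = sS C lam x := by
  rw [sQE, sS, ← Finset.sum_product']
  refine Finset.sum_congr rfl fun p _ => ?_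
  rw [wF, inner_eV]
  ring_nf

lemma sS_pos (hMa : 0 < Ma) (hMb : 0 < Mb) (x : EuclideanSpace ℝ (Fin Ma ⊕ Fin Mb)) :
    0 < sS C lam x := by
  haveI : NeZero Ma := ⟨hMa.ne'⟩
  haveI : NeZero Mb := ⟨hMb.ne'⟩
  exact Finset.sum_pos (fun p _ => wF_pos C lam x p) Finset.univ_nonempty

lemma sum_w_inner_sq_le (x h : EuclideanSpace ℝ (Fin Ma ⊕ Fin Mb)) :
    ∑ p : Fin Ma × Fin Mb, wF C lam x p * (inner ℝ (eV p) h : ℝ)^2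
      ≤ sS C lam x * (2 * ‖h‖^2) := by
  rw [sS, Finset.sum_mul]
  refine Finset.sum_le_sum fun p _ => ?_
  have := mul_le_mul_of_nonneg_left (inner_eV_sq_le p h) (wF_pos C lam x p).le
  linarith


/-! ### Derivative machinery -/

lemma hasFDerivAt_wF (p : Fin Ma × Fin Mb) (x : EuclideanSpace ℝ (Fin Ma ⊕ Fin Mb)) :
    HasFDerivAt (fun y => wF C lam y p) ((lam * wF C lam x p) • innerSL ℝ (eV p)) x := by
  have h1 : HasFDerivAt (fun y : EuclideanSpace ℝ (Fin Ma ⊕ Fin Mb) =>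
      lam * (inner ℝ (eV p) y : ℝ) - (lam * C p.1 p.2 + 1))
      (lam • innerSL ℝ (eV p)) x := by
    have := ((innerSL ℝ (eV p)).hasFDerivAt (x := x)).const_mul lam
    exact this.sub_const _
  have h2 := (Real.hasDerivAt_exp
    (lam * (inner ℝ (eV p) x : ℝ) - (lam * C p.1 p.2 + 1))).comp_hasFDerivAt x h1
  refine h2.congr_fderiv ?_
  symm
  rw [smul_smul, mul_comm]
  rfl

noncomputable def U (x : EuclideanSpace ℝ (Fin Ma ⊕ Fin Mb)) :
    EuclideanSpace ℝ (Fin Ma ⊕ Fin Mb) →L[ℝ] ℝ :=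
  ∑ p : Fin Ma × Fin Mb, wF C lam x p • innerSL ℝ (eV p)

noncomputable def T (x : EuclideanSpace ℝ (Fin Ma ⊕ Fin Mb)) :
    EuclideanSpace ℝ (Fin Ma ⊕ Fin Mb) →L[ℝ]
      (EuclideanSpace ℝ (Fin Ma ⊕ Fin Mb) →L[ℝ] ℝ) :=
  ∑ p : Fin Ma × Fin Mb,
    (lam * wF C lam x p) • ((innerSL ℝ (eV p)).smulRight (innerSL ℝ (eV p)))

lemma U_apply (x h : EuclideanSpace ℝ (Fin Ma ⊕ Fin Mb)) :
    U C lam x h = ∑ p : Fin Ma × Fin Mb, wF C lam x p * (inner ℝ (eV p) h : ℝ) := by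
  simp [U, ContinuousLinearMap.sum_apply]

lemma T_apply (x h k : EuclideanSpace ℝ (Fin Ma ⊕ Fin Mb)) :
    T C lam x h k = ∑ p : Fin Ma × Fin Mb,
      lam * (wF C lam x p * ((inner ℝ (eV p) h : ℝ) * (inner ℝ (eV p) k : ℝ))) := by
  simp [T, ContinuousLinearMap.sum_apply, mul_assoc, mul_comm, mul_left_comm]

lemma hasFDerivAt_U (x : EuclideanSpace ℝ (Fin Ma ⊕ Fin Mb)) :
    HasFDerivAt (fun y => U C lam y) (T C lam x) x := by
  refine HasFDerivAt.fun_sum fun p _ => ?_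
  have := (hasFDerivAt_wF C lam p x).smul_const (innerSL ℝ (eV p))
  convert this using 1
  ext h k
  simp [ContinuousLinearMap.smulRight_apply, mul_assoc, mul_comm, mul_left_comm]

lemma hasFDerivAt_sS (x : EuclideanSpace ℝ (Fin Ma ⊕ Fin Mb)) :
    HasFDerivAt (fun y => sS C lam y) (lam • U C lam x) x := by
  have := HasFDerivAt.fun_sum (fun p (_ : p ∈ Finset.univ) => hasFDerivAt_wF C lam p x)
  refine this.congr_fderiv ?_
  symm
  rw [U, Finset.smul_sum]
  refine Finset.sum_congr rfl fun p _ => ?_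
  rw [smul_smul]

/-! ### Norm bound on `T` -/

lemma sqrtsqrt {x y X Y : ℝ} (hx : 0 ≤ x) (hy : 0 ≤ y) (hX : x ≤ X) (hY : y ≤ Y) :
    Real.sqrt x * Real.sqrt y ≤ Real.sqrt (X * Y) := by
  rw [← Real.sqrt_mul hx]
  exact Real.sqrt_le_sqrt (mul_le_mul hX hY hy (le_trans hx hX))

lemma abs_sum_w_ab_le (x h k : EuclideanSpace ℝ (Fin Ma ⊕ Fin Mb)) :
    |∑ p : Fin Ma × Fin Mb,
        wF C lam x p * ((inner ℝ (eV p) h : ℝ) * (inner ℝ (eV p) k : ℝ))|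
      ≤ 2 * sS C lam x * ‖h‖ * ‖k‖ := by
  have hcs := cauchy_w (wF C lam x) (fun p => (inner ℝ (eV p) h : ℝ))
    (fun p => (inner ℝ (eV p) k : ℝ)) (fun p => (wF_pos C lam x p).le)
  refine le_trans hcs ?_
  have hA : (0:ℝ) ≤ ∑ p : Fin Ma × Fin Mb, wF C lam x p * (inner ℝ (eV p) h : ℝ)^2 :=
    Finset.sum_nonneg fun p _ => mul_nonneg (wF_pos C lam x p).le (sq_nonneg _)
  have hB : (0:ℝ) ≤ ∑ p : Fin Ma × Fin Mb, wF C lam x p * (inner ℝ (eV p) k : ℝ)^2 :=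
    Finset.sum_nonneg fun p _ => mul_nonneg (wF_pos C lam x p).le (sq_nonneg _)
  have := sqrtsqrt hA hB (sum_w_inner_sq_le C lam x h) (sum_w_inner_sq_le C lam x k)
  refine le_trans this ?_
  have heq : sS C lam x * (2 * ‖h‖^2) * (sS C lam x * (2 * ‖k‖^2))
      = (2 * sS C lam x * ‖h‖ * ‖k‖)^2 := by ring
  have hs0 : 0 ≤ sS C lam x := Finset.sum_nonneg fun p _ => (wF_pos C lam x p).le
  rw [heq, Real.sqrt_sq (by positivity)]

lemma T_norm_bound (hlam : 0 < lam) (x : EuclideanSpace ℝ (Fin Ma ⊕ Fin Mb)) :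
    ‖T C lam x‖ ≤ lam * (2 * sS C lam x) := by
  have hs0 : 0 ≤ sS C lam x := Finset.sum_nonneg fun p _ => (wF_pos C lam x p).le
  refine ContinuousLinearMap.opNorm_le_bound _ (by positivity) fun h => ?_
  refine ContinuousLinearMap.opNorm_le_bound _ (by positivity) fun k => ?_
  rw [T_apply, ← Finset.mul_sum, Real.norm_eq_abs, abs_mul, abs_of_pos hlam]
  calc lam * |∑ p : Fin Ma × Fin Mb,
        wF C lam x p * ((inner ℝ (eV p) h : ℝ) * (inner ℝ (eV p) k : ℝ))|
      ≤ lam * (2 * sS C lam x * ‖h‖ * ‖k‖) := by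
        exact mul_le_mul_of_nonneg_left (abs_sum_w_ab_le C lam x h k) hlam.le
    _ = lam * (2 * sS C lam x) * ‖h‖ * ‖k‖ := by ring


/-! ### The vector fields and their derivatives -/

noncomputable def Phi1 (x : EuclideanSpace ℝ (Fin Ma ⊕ Fin Mb)) :
    EuclideanSpace ℝ (Fin Ma ⊕ Fin Mb) →L[ℝ] ℝ := N • U C lam x

noncomputable def Phi2 (x : EuclideanSpace ℝ (Fin Ma ⊕ Fin Mb)) :
    EuclideanSpace ℝ (Fin Ma ⊕ Fin Mb) →L[ℝ] ℝ := (N * (sS C lam x)⁻¹) • U C lam x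

noncomputable def H2 (x : EuclideanSpace ℝ (Fin Ma ⊕ Fin Mb)) :
    EuclideanSpace ℝ (Fin Ma ⊕ Fin Mb) →L[ℝ]
      (EuclideanSpace ℝ (Fin Ma ⊕ Fin Mb) →L[ℝ] ℝ) :=
  (N * (sS C lam x)⁻¹) • T C lam x
    + (N • ((-(sS C lam x ^ 2)⁻¹) • (lam • U C lam x))).smulRight (U C lam x)

lemma hasFDerivAt_Phi1 (x : EuclideanSpace ℝ (Fin Ma ⊕ Fin Mb)) :
    HasFDerivAt (Phi1 C lam N) (N • T C lam x) x :=
  (hasFDerivAt_U C lam x).const_smul N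

lemma hasFDerivAt_Phi2 (x : EuclideanSpace ℝ (Fin Ma ⊕ Fin Mb)) (hs : 0 < sS C lam x) :
    HasFDerivAt (Phi2 C lam N) (H2 C lam N x) x := by
  have hinv := (hasDerivAt_inv hs.ne').comp_hasFDerivAt x (hasFDerivAt_sS C lam x)
  have hc := hinv.const_mul N
  exact hc.smul (hasFDerivAt_U C lam x)

lemma H1_norm_bound (hlam : 0 < lam) (hN : 0 ≤ N) (x : EuclideanSpace ℝ (Fin Ma ⊕ Fin Mb))
    (h1 : sS C lam x ≤ 1) : ‖N • T C lam x‖ ≤ 2 * lam * N := by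
  have hns : ‖N • T C lam x‖ ≤ N * ‖T C lam x‖ := by
    refine le_trans (ContinuousLinearMap.opNorm_smul_le N (T C lam x)) ?_
    rw [Real.norm_eq_abs, abs_of_nonneg hN]
  refine le_trans hns ?_
  calc N * ‖T C lam x‖ ≤ N * (lam * (2 * sS C lam x)) :=
        mul_le_mul_of_nonneg_left (T_norm_bound C lam hlam x) hN
    _ ≤ N * (lam * (2 * 1)) := by
        refine mul_le_mul_of_nonneg_left ?_ hN
        refine mul_le_mul_of_nonneg_left ?_ hlam.le
        linarith
    _ = 2 * lam * N := by ring

lemma H2_norm_bound (hlam : 0 < lam) (hN : 0 ≤ N) (x : EuclideanSpace ℝ (Fin Ma ⊕ Fin Mb))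
    (hs : 0 < sS C lam x) : ‖H2 C lam N x‖ ≤ 2 * lam * N := by
  refine ContinuousLinearMap.opNorm_le_bound _ (by positivity) fun h => ?_
  refine ContinuousLinearMap.opNorm_le_bound _ (by positivity) fun k => ?_
  have hval : H2 C lam N x h k
      = N * lam * ((sS C lam x)⁻¹ *
        ((∑ p : Fin Ma × Fin Mb,
            wF C lam x p * ((inner ℝ (eV p) h : ℝ) * (inner ℝ (eV p) k : ℝ)))
          - (sS C lam x)⁻¹ * ((∑ p : Fin Ma × Fin Mb, wF C lam x p * (inner ℝ (eV p) h : ℝ))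
              * (∑ p : Fin Ma × Fin Mb, wF C lam x p * (inner ℝ (eV p) k : ℝ))))) := by
    have hTa := T_apply C lam x h k
    have hUh := U_apply C lam x h
    have hUk := U_apply C lam x k
    simp only [H2, ContinuousLinearMap.add_apply, ContinuousLinearMap.smul_apply,
      ContinuousLinearMap.smulRight_apply, smul_eq_mul, hTa, hUh, hUk, ← Finset.mul_sum]
    have hs2 : (sS C lam x) ≠ 0 := hs.ne'
    field_simp
    ring
  rw [Real.norm_eq_abs, hval]
  have hcov := cov_bound (wF C lam x) (fun p => (inner ℝ (eV p) h : ℝ))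
    (fun p => (inner ℝ (eV p) k : ℝ)) (fun p => (wF_pos C lam x p).le)
    (by rw [← sS]; exact hs) (Ca := 2 * ‖h‖^2) (Cb := 2 * ‖k‖^2)
    (by rw [← sS]; exact sum_w_inner_sq_le C lam x h)
    (by rw [← sS]; exact sum_w_inner_sq_le C lam x k)
  rw [← sS] at hcov
  have hsqrt : Real.sqrt (2 * ‖h‖^2 * (2 * ‖k‖^2)) = 2 * ‖h‖ * ‖k‖ := by
    have h2 : 2 * ‖h‖^2 * (2 * ‖k‖^2) = (2 * ‖h‖ * ‖k‖)^2 := by ring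
    rw [h2, Real.sqrt_sq (by positivity)]
  rw [hsqrt] at hcov
  have habs : |(∑ p : Fin Ma × Fin Mb,
        wF C lam x p * ((inner ℝ (eV p) h : ℝ) * (inner ℝ (eV p) k : ℝ)))
      - (sS C lam x)⁻¹ * ((∑ p : Fin Ma × Fin Mb, wF C lam x p * (inner ℝ (eV p) h : ℝ))
          * (∑ p : Fin Ma × Fin Mb, wF C lam x p * (inner ℝ (eV p) k : ℝ)))|
      ≤ sS C lam x * (2 * ‖h‖ * ‖k‖) := by simpa using hcov
  rw [abs_mul, abs_mul, abs_mul, abs_of_nonneg hN, abs_of_pos hlam,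
    abs_of_pos (inv_pos.2 hs)]
  have hstep : N * lam * ((sS C lam x)⁻¹ * |(∑ p : Fin Ma × Fin Mb,
        wF C lam x p * ((inner ℝ (eV p) h : ℝ) * (inner ℝ (eV p) k : ℝ)))
      - (sS C lam x)⁻¹ * ((∑ p : Fin Ma × Fin Mb, wF C lam x p * (inner ℝ (eV p) h : ℝ))
          * (∑ p : Fin Ma × Fin Mb, wF C lam x p * (inner ℝ (eV p) k : ℝ)))|)
      ≤ N * lam * ((sS C lam x)⁻¹ * (sS C lam x * (2 * ‖h‖ * ‖k‖))) :=
    mul_le_mul_of_nonneg_left (mul_le_mul_of_nonneg_left habs (inv_pos.2 hs).le)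
      (mul_nonneg hN hlam.le)
  have heq : N * lam * ((sS C lam x)⁻¹ * (sS C lam x * (2 * ‖h‖ * ‖k‖)))
      = 2 * lam * N * ‖h‖ * ‖k‖ := by
    have hs2 : (sS C lam x) ≠ 0 := hs.ne'
    field_simp
  exact le_trans hstep heq.le


/-! ### The scalar outer function -/

noncomputable def hfun (t : ℝ) : ℝ :=
  if t ≤ 1 then (N / lam) * t else (N / lam) * Real.log t + N / lam

lemma hasDerivAt_hfun (t : ℝ) (ht : 0 < t) :
    HasDerivAt (hfun lam N) ((N / lam) * min 1 t⁻¹) t := by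
  rcases lt_trichotomy t 1 with hlt | heq | hgt
  · have hmin : min 1 t⁻¹ = 1 := min_eq_left (one_le_inv_iff₀.2 ⟨ht, hlt.le⟩)
    rw [hmin, mul_one]
    have hlin : HasDerivAt (fun u : ℝ => (N / lam) * u) (N / lam) t := by
      simpa using (hasDerivAt_id t).const_mul (N / lam)
    refine hlin.congr_of_eventuallyEq ?_
    filter_upwards [eventually_lt_nhds hlt] with u hu
    simp [hfun, hu.le]
  · subst heq
    have hmin : min (1:ℝ) (1:ℝ)⁻¹ = 1 := by norm_num
    rw [hmin, mul_one]
    rw [← hasDerivWithinAt_univ, ← Set.Iic_union_Ici (a := (1:ℝ))]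
    refine HasDerivWithinAt.union ?_ ?_
    · have hlin : HasDerivWithinAt (fun u : ℝ => (N / lam) * u) (N / lam) (Iic 1) 1 :=
        (by simpa using (hasDerivAt_id (1:ℝ)).const_mul (N / lam) :
          HasDerivAt (fun u : ℝ => (N / lam) * u) (N / lam) 1).hasDerivWithinAt
      refine hlin.congr (fun u hu => ?_) (by simp [hfun])
      simp [hfun, (mem_Iic.1 hu)]
    · have hlog : HasDerivWithinAt (fun u : ℝ => (N / lam) * Real.log u + N / lam)
          (N / lam) (Ici 1) 1 := by
        have := ((Real.hasDerivAt_log (by norm_num : (1:ℝ) ≠ 0)).const_mul (N / lam)).add_const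
          (N / lam)
        simpa using this.hasDerivWithinAt
      refine hlog.congr (fun u hu => ?_) (by simp [hfun])
      rcases eq_or_lt_of_le (mem_Ici.1 hu) with h | h
      · simp [hfun, ← h]
      · simp [hfun, not_le.2 h]
  · have hmin : min 1 t⁻¹ = t⁻¹ := min_eq_right ((inv_le_one₀ ht).2 hgt.le)
    rw [hmin]
    have hlog : HasDerivAt (fun u : ℝ => (N / lam) * Real.log u + N / lam)
        ((N / lam) * t⁻¹) t :=
      ((Real.hasDerivAt_log (ne_of_gt ht)).const_mul (N / lam)).add_const (N / lam)
    refine hlog.congr_of_eventuallyEq ?_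
    filter_upwards [eventually_gt_nhds hgt] with u hu
    simp [hfun, not_le.2 hu]

lemma FconjE_eq_comp : FconjE C lam N = fun x => hfun lam N (sS C lam x) := by
  funext x
  rw [FconjE, hfun, sQE_eq_sS]

/-! ### The gradient of `F` -/

noncomputable def Phi (x : EuclideanSpace ℝ (Fin Ma ⊕ Fin Mb)) :
    EuclideanSpace ℝ (Fin Ma ⊕ Fin Mb) →L[ℝ] ℝ :=
  ((N / lam) * min 1 (sS C lam x)⁻¹) • (lam • U C lam x)

lemma hasFDerivAt_FconjE (x : EuclideanSpace ℝ (Fin Ma ⊕ Fin Mb))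
    (hs : 0 < sS C lam x) :
    HasFDerivAt (FconjE C lam N) (Phi C lam N x) x := by
  rw [FconjE_eq_comp]
  exact (hasDerivAt_hfun lam N _ hs).comp_hasFDerivAt x (hasFDerivAt_sS C lam x)

lemma gradient_FconjE_eq (x : EuclideanSpace ℝ (Fin Ma ⊕ Fin Mb))
    (hs : 0 < sS C lam x) :
    gradient (FconjE C lam N) x
      = (InnerProductSpace.toDual ℝ (EuclideanSpace ℝ (Fin Ma ⊕ Fin Mb))).symm
          (Phi C lam N x) :=
  ((hasFDerivAt_FconjE C lam N x hs).hasGradientAt).gradient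

lemma Phi_eq_Phi1 (hlam : lam ≠ 0) (x : EuclideanSpace ℝ (Fin Ma ⊕ Fin Mb))
    (hs : 0 < sS C lam x) (h1 : sS C lam x ≤ 1) :
    Phi C lam N x = Phi1 C lam N x := by
  rw [Phi, Phi1]
  have hmin : min 1 (sS C lam x)⁻¹ = 1 := min_eq_left (one_le_inv_iff₀.2 ⟨hs, h1⟩)
  rw [hmin, smul_smul]
  congr 1
  field_simp

lemma Phi_eq_Phi2 (hlam : lam ≠ 0) (x : EuclideanSpace ℝ (Fin Ma ⊕ Fin Mb))
    (hs : 0 < sS C lam x) (h1 : 1 ≤ sS C lam x) :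
    Phi C lam N x = Phi2 C lam N x := by
  rw [Phi, Phi2]
  have hmin : min 1 (sS C lam x)⁻¹ = (sS C lam x)⁻¹ :=
    min_eq_right ((inv_le_one₀ hs).2 h1)
  rw [hmin, smul_smul]
  congr 1
  field_simp

/-! ### Convexity and continuity of `s` -/

lemma convexOn_sS : ConvexOn ℝ Set.univ (sS C lam) := by
  refine ⟨convex_univ, fun x _ y _ a b ha hb hab => ?_⟩
  rw [sS, smul_eq_mul, smul_eq_mul, sS, sS, Finset.mul_sum, Finset.mul_sum,
    ← Finset.sum_add_distrib]
  refine Finset.sum_le_sum fun p _ => ?_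
  have harg : lam * (inner ℝ (eV p) (a • x + b • y) : ℝ) - (lam * C p.1 p.2 + 1)
      = a * (lam * (inner ℝ (eV p) x : ℝ) - (lam * C p.1 p.2 + 1))
        + b * (lam * (inner ℝ (eV p) y : ℝ) - (lam * C p.1 p.2 + 1)) := by
    rw [inner_add_right, real_inner_smul_right, real_inner_smul_right]
    linear_combination (lam * C p.1 p.2 + 1) * hab
  rw [wF, wF, wF, harg]
  have := convexOn_exp.2 (Set.mem_univ (lam * (inner ℝ (eV p) x : ℝ) - (lam * C p.1 p.2 + 1)))
    (Set.mem_univ (lam * (inner ℝ (eV p) y : ℝ) - (lam * C p.1 p.2 + 1))) ha hb hab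
  simpa [smul_eq_mul] using this

lemma convex_sublevel : Convex ℝ {x : EuclideanSpace ℝ (Fin Ma ⊕ Fin Mb) | sS C lam x ≤ 1} := by
  have := (convexOn_sS C lam).convex_le 1
  simpa using this

lemma continuous_sS : Continuous (sS C lam) := by
  refine continuous_finset_sum _ fun p _ => ?_
  exact Real.continuous_exp.comp
    (((innerSL ℝ (eV p)).continuous.const_smul lam).sub continuous_const)


/-! ### Lipschitz bounds -/

lemma lip_Phi1 (hlam : 0 < lam) (hN : 0 ≤ N) :
    LipschitzOnWith (2 * lam * N).toNNReal (Phi1 C lam N)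
      {x : EuclideanSpace ℝ (Fin Ma ⊕ Fin Mb) | sS C lam x ≤ 1} := by
  refine (convex_sublevel C lam).lipschitzOnWith_of_nnnorm_hasFDerivWithin_le
    (f' := fun x => N • T C lam x)
    (fun x _ => (hasFDerivAt_Phi1 C lam N x).hasFDerivWithinAt) (fun x hx => ?_)
  rw [← NNReal.coe_le_coe, coe_nnnorm, Real.coe_toNNReal _ (by positivity)]
  exact H1_norm_bound C lam N hlam hN x hx

lemma lip_Phi2 (hMa : 0 < Ma) (hMb : 0 < Mb) (hlam : 0 < lam) (hN : 0 ≤ N) :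
    LipschitzWith (2 * lam * N).toNNReal (Phi2 C lam N) := by
  rw [← lipschitzOnWith_univ]
  refine convex_univ.lipschitzOnWith_of_nnnorm_hasFDerivWithin_le
    (f' := fun x => H2 C lam N x)
    (fun x _ => (hasFDerivAt_Phi2 C lam N x (sS_pos C lam hMa hMb x)).hasFDerivWithinAt)
    (fun x _ => ?_)
  rw [← NNReal.coe_le_coe, coe_nnnorm, Real.coe_toNNReal _ (by positivity)]
  exact H2_norm_bound C lam N hlam hN x (sS_pos C lam hMa hMb x)

lemma Phi_bound (hMa : 0 < Ma) (hMb : 0 < Mb) (hlam : 0 < lam) (hN : 0 < N) :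
    ∀ X X' : EuclideanSpace ℝ (Fin Ma ⊕ Fin Mb),
      ‖Phi C lam N X - Phi C lam N X'‖ ≤ 2 * lam * N * ‖X - X'‖ := by
  have hpos : ∀ x, 0 < sS C lam x := sS_pos C lam hMa hMb
  have hK : ((2 * lam * N).toNNReal : ℝ) = 2 * lam * N :=
    Real.coe_toNNReal _ (by positivity)
  have lip1 := lip_Phi1 C lam N hlam hN.le
  have lip2 := lip_Phi2 C lam N hMa hMb hlam hN.le
  have bnd1 : ∀ x y : EuclideanSpace ℝ (Fin Ma ⊕ Fin Mb), sS C lam x ≤ 1 → sS C lam y ≤ 1 →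
      ‖Phi C lam N x - Phi C lam N y‖ ≤ 2 * lam * N * ‖x - y‖ := by
    intro x y hx hy
    rw [Phi_eq_Phi1 C lam N hlam.ne' x (hpos x) hx,
      Phi_eq_Phi1 C lam N hlam.ne' y (hpos y) hy]
    have := lip1.dist_le_mul x hx y hy
    rw [dist_eq_norm, dist_eq_norm, hK] at this
    exact this
  have bnd2 : ∀ x y : EuclideanSpace ℝ (Fin Ma ⊕ Fin Mb), 1 ≤ sS C lam x → 1 ≤ sS C lam y →
      ‖Phi C lam N x - Phi C lam N y‖ ≤ 2 * lam * N * ‖x - y‖ := by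
    intro x y hx hy
    rw [Phi_eq_Phi2 C lam N hlam.ne' x (hpos x) hx,
      Phi_eq_Phi2 C lam N hlam.ne' y (hpos y) hy]
    have := lip2.dist_le_mul x y
    rw [dist_eq_norm, dist_eq_norm, hK] at this
    exact this
  have bndmix : ∀ x y : EuclideanSpace ℝ (Fin Ma ⊕ Fin Mb), sS C lam x ≤ 1 → 1 ≤ sS C lam y →
      ‖Phi C lam N x - Phi C lam N y‖ ≤ 2 * lam * N * ‖x - y‖ := by
    intro x y hx hy
    set g : ℝ → ℝ := fun t => sS C lam (x + t • (y - x)) with hgdef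
    have hg : Continuous g :=
      (continuous_sS C lam).comp (continuous_const.add (continuous_id.smul continuous_const))
    have hg0 : g 0 = sS C lam x := by simp [hgdef]
    have hg1 : g 1 = sS C lam y := by simp [hgdef]
    have hsub := intermediate_value_Icc (zero_le_one) hg.continuousOn
    have h1mem : (1:ℝ) ∈ Icc (g 0) (g 1) := by
      rw [hg0, hg1]; exact ⟨hx, hy⟩
    obtain ⟨t, ht, hgt⟩ := hsub h1mem
    set z : EuclideanSpace ℝ (Fin Ma ⊕ Fin Mb) := x + t • (y - x) with hzdef
    have hz : sS C lam z = 1 := hgt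
    have hxz : ‖x - z‖ = t * ‖x - y‖ := by
      have h1 : x - z = -(t • (y - x)) := by rw [hzdef]; abel
      rw [h1, norm_neg, norm_smul, Real.norm_eq_abs, abs_of_nonneg ht.1, norm_sub_rev]
    have hzy : ‖z - y‖ = (1 - t) * ‖x - y‖ := by
      have h1 : z - y = -((1 - t) • (y - x)) := by
        rw [hzdef, sub_smul, one_smul, neg_sub]
        abel
      rw [h1, norm_neg, norm_smul, Real.norm_eq_abs, abs_of_nonneg (by linarith [ht.2]),
        norm_sub_rev]
    calc ‖Phi C lam N x - Phi C lam N y‖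
        ≤ ‖Phi C lam N x - Phi C lam N z‖ + ‖Phi C lam N z - Phi C lam N y‖ :=
          norm_sub_le_norm_sub_add_norm_sub _ _ _
      _ ≤ 2 * lam * N * ‖x - z‖ + 2 * lam * N * ‖z - y‖ :=
          add_le_add (bnd1 x z hx hz.le) (bnd2 z y hz.ge hy)
      _ = 2 * lam * N * ‖x - y‖ := by rw [hxz, hzy]; ring
  intro X X'
  rcases le_total (sS C lam X) 1 with h1 | h1 <;> rcases le_total (sS C lam X') 1 with h2 | h2
  · exact bnd1 X X' h1 h2
  · exact bndmix X X' h1 h2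
  · rw [norm_sub_rev, norm_sub_rev X X']
    exact bndmix X' X h2 h1
  · exact bnd2 X X' h1 h2

end SinkProof

/-- (Proposition 2) The gradient of the conjugate `F` of the normalized
Sinkhorn distance is Lipschitz continuous with constant at most `2λN`
(Euclidean norms on `ℝ^{Ma}×ℝ^{Mb} ≅ ℝ^{Ma+Mb}`). -/
theorem gradient_Fconj_lipschitz (Ma Mb : ℕ) (hMa : 0 < Ma) (hMb : 0 < Mb)
    (C : Matrix (Fin Ma) (Fin Mb) ℝ) (lam N : ℝ) (hlam : 0 < lam) (hN : 0 < N) :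
    ∀ X X' : EuclideanSpace ℝ (Fin Ma ⊕ Fin Mb),
      ‖gradient (FconjE C lam N) X - gradient (FconjE C lam N) X'‖
        ≤ 2 * lam * N * ‖X - X'‖ := by
  intro X X'
  have hpos : ∀ x, 0 < SinkProof.sS C lam x := SinkProof.sS_pos C lam hMa hMb
  rw [SinkProof.gradient_FconjE_eq C lam N X (hpos X),
    SinkProof.gradient_FconjE_eq C lam N X' (hpos X'), ← map_sub,
    LinearIsometryEquiv.norm_map]
  exact SinkProof.Phi_bound C lam N hMa hMb hlam hN X X'
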